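/- Let ℓ(s) = 1 + |log s|, ℓℓ(s) = 1 + log ℓ(s) and ℓℓℓ(s) = 1 + log ℓℓ(s). For q ∈ (1,∞], one has ‖s^{-1/q'} ℓ(s)^{-1/q'} ℓℓ(s)^{-1/q'}‖_{L^{q'}(r, 1-r)} ≈ ℓℓℓ(r)^{1/q'} near 0, with constants independent of r. -/

import Mathlib

open MeasureTheory Set
open scoped ENNReal

noncomputable def ell (s : ℝ) : ℝ := 1 + |Real.log s|
noncomputable def ellell (s : ℝ) : ℝ := 1 + Real.log (ell s)
noncomputable def ellellell (s : ℝ) : ℝ := 1 + Real.log (ellell s)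

lemma ell_eq {s : ℝ} (h0 : 0 < s) (h1 : s < 1) : ell s = 1 - Real.log s := by
  unfold ell
  rw [abs_of_neg (Real.log_neg h0 h1)]
  ring

lemma one_le_ell (s : ℝ) : 1 ≤ ell s := by
  have := abs_nonneg (Real.log s)
  unfold ell; linarith

lemma one_le_ellell (s : ℝ) : 1 ≤ ellell s := by
  have := Real.log_nonneg (one_le_ell s)
  unfold ellell; linarith

lemma one_le_ellellell (s : ℝ) : 1 ≤ ellellell s := by
  have := Real.log_nonneg (one_le_ellell s)
  unfold ellellell; linarith

lemma F_eq {s : ℝ} (h0 : 0 < s) (h1 : s < 1) :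
    ellellell s = 1 + Real.log (1 + Real.log (1 - Real.log s)) := by
  unfold ellellell ellell
  rw [ell_eq h0 h1]

lemma hasDerivAt_negF {s : ℝ} (h0 : 0 < s) (h1 : s < 1) :
    HasDerivAt (fun t : ℝ => -(1 + Real.log (1 + Real.log (1 - Real.log t))))
      (s⁻¹ * (ell s)⁻¹ * (ellell s)⁻¹) s := by
  have hls : Real.log s < 0 := Real.log_neg h0 h1
  have h2 : (0:ℝ) < 1 - Real.log s := by linarith
  have h3 : (0:ℝ) < 1 + Real.log (1 - Real.log s) := by
    have := Real.log_nonneg (by linarith : (1:ℝ) ≤ 1 - Real.log s)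
    linarith
  have d1 : HasDerivAt (fun t : ℝ => 1 - Real.log t) (-s⁻¹) s := by
    simpa using (Real.hasDerivAt_log h0.ne').const_sub 1
  have d2 : HasDerivAt (fun t : ℝ => Real.log (1 - Real.log t))
      (-s⁻¹ / (1 - Real.log s)) s := d1.log h2.ne'
  have d3 : HasDerivAt (fun t : ℝ => 1 + Real.log (1 - Real.log t))
      (-s⁻¹ / (1 - Real.log s)) s := d2.const_add 1
  have d4 : HasDerivAt (fun t : ℝ => Real.log (1 + Real.log (1 - Real.log t)))
      ((-s⁻¹ / (1 - Real.log s)) / (1 + Real.log (1 - Real.log s))) s := d3.log h3.ne'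
  have d5 : HasDerivAt (fun t : ℝ => -(1 + Real.log (1 + Real.log (1 - Real.log t))))
      (-((-s⁻¹ / (1 - Real.log s)) / (1 + Real.log (1 - Real.log s)))) s :=
    ((d4.const_add 1).neg)
  convert d5 using 1
  rw [ell_eq h0 h1]
  have hee : ellell s = 1 + Real.log (1 - Real.log s) := by
    unfold ellell; rw [ell_eq h0 h1]
  rw [hee]
  field_simp

lemma g_contOn {a b : ℝ} (ha : 0 < a) :
    ContinuousOn (fun x : ℝ => x⁻¹ * (ell x)⁻¹ * (ellell x)⁻¹) (Icc a b) := by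
  have hsub : Icc a b ⊆ {(0:ℝ)}ᶜ := fun x hx => by
    simp only [mem_compl_iff, mem_singleton_iff]
    exact (lt_of_lt_of_le ha hx.1).ne'
  have hell : ContinuousOn ell (Icc a b) :=
    continuousOn_const.add (Real.continuousOn_log.mono hsub).abs
  have hellne : ∀ x ∈ Icc a b, ell x ≠ 0 := fun x _ =>
    (lt_of_lt_of_le one_pos (one_le_ell x)).ne'
  have hellell : ContinuousOn ellell (Icc a b) :=
    continuousOn_const.add (hell.log hellne)
  have hellellne : ∀ x ∈ Icc a b, ellell x ≠ 0 := fun x _ =>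
    (lt_of_lt_of_le one_pos (one_le_ellell x)).ne'
  exact ((continuousOn_id.inv₀ (fun x hx => (lt_of_lt_of_le ha hx.1).ne')).mul
    (hell.inv₀ hellne)).mul (hellell.inv₀ hellellne)

/-- For `q ∈ (1,∞]`:
`‖s^{-1/q'} ℓ(s)^{-1/q'} ℓℓ(s)^{-1/q'}‖_{L^{q'}(r,1-r)} ≈ ℓℓℓ(r)^{1/q'}` near `0`. -/
theorem stmt13 (q q' : ℝ≥0∞) (hq : 1 < q) (hconj : 1 / q + 1 / q' = 1) :
    ∃ c C r₀ : ℝ, 0 < c ∧ 0 < C ∧ 0 < r₀ ∧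
      ∀ r ∈ Set.Ioo (0 : ℝ) r₀,
        ENNReal.ofReal (c * ellellell r ^ (1 / q').toReal) ≤
            eLpNorm (fun s : ℝ =>
                s ^ (-(1 / q').toReal) * ell s ^ (-(1 / q').toReal) *
                  ellell s ^ (-(1 / q').toReal))
              q' (volume.restrict (Set.Ioo r (1 - r))) ∧
          eLpNorm (fun s : ℝ =>
                s ^ (-(1 / q').toReal) * ell s ^ (-(1 / q').toReal) *
                  ellell s ^ (-(1 / q').toReal))
              q' (volume.restrict (Set.Ioo r (1 - r))) ≤
            ENNReal.ofReal (C * ellellell r ^ (1 / q').toReal) := by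
  -- basic facts about q'
  have hq1 : q⁻¹ < 1 := ENNReal.inv_lt_one.mpr hq
  rw [one_div, one_div] at hconj
  have hq'le : q'⁻¹ ≤ 1 := by
    calc q'⁻¹ ≤ q⁻¹ + q'⁻¹ := le_add_self
    _ = 1 := hconj
  have hq'ne : q'⁻¹ ≠ 0 := by
    intro h
    rw [h, add_zero] at hconj
    exact hq1.ne hconj
  have hq'top : q' ≠ ⊤ := by
    intro h; rw [h] at hq'ne; simp at hq'ne
  have hq'0 : q' ≠ 0 := by
    intro h; rw [h] at hq'le; simp at hq'le
  have htR : 0 < q'.toReal := ENNReal.toReal_pos hq'0 hq'top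
  set pR := (1 / q').toReal with hpRdef
  have hpR : pR = (q'.toReal)⁻¹ := by
    rw [hpRdef, one_div, ENNReal.toReal_inv]
  have hp_pos : 0 < pR := by rw [hpR]; positivity
  have hp_le : pR ≤ 1 := by
    rw [hpRdef, one_div]
    calc (q'⁻¹).toReal ≤ (1 : ℝ≥0∞).toReal := ENNReal.toReal_mono (by simp) hq'le
    _ = 1 := by simp
  have hmul : q'.toReal * pR = 1 := by
    rw [hpR]; field_simp
  -- choose r₀
  refine ⟨1/2, 1, min (Real.exp (1 - Real.exp (Real.exp 3 - 1))) (1/2),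
    by norm_num, by norm_num, lt_min (Real.exp_pos _) (by norm_num), ?_⟩
  rintro r ⟨hr0, hrr₀⟩
  have hr2 : r < 1/2 := lt_of_lt_of_le hrr₀ (min_le_right _ _)
  have hrA : r < Real.exp (1 - Real.exp (Real.exp 3 - 1)) :=
    lt_of_lt_of_le hrr₀ (min_le_left _ _)
  have hr1 : r < 1 := by linarith
  have hle : r ≤ 1 - r := by linarith
  have h1r0 : (0:ℝ) < 1 - r := by linarith
  have h1r1 : 1 - r < 1 := by linarith
  -- lower bound: L = ellellell r > 4
  have hlogr : Real.log r < 1 - Real.exp (Real.exp 3 - 1) := by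
    have := Real.log_lt_log hr0 hrA
    rwa [Real.log_exp] at this
  have hellr : Real.exp (Real.exp 3 - 1) < ell r := by
    rw [ell_eq hr0 hr1]; linarith
  have h2' : Real.exp 3 - 1 < Real.log (ell r) := by
    have := Real.log_lt_log (Real.exp_pos _) hellr
    rwa [Real.log_exp] at this
  have h3' : Real.exp 3 < ellell r := by unfold ellell; linarith
  have h4' : (3:ℝ) < Real.log (ellell r) := by
    have := Real.log_lt_log (Real.exp_pos _) h3'
    rwa [Real.log_exp] at this
  have hL4 : (4:ℝ) < ellellell r := by unfold ellellell; linarith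
  -- bounds at 1 - r
  have hB1 : 1 ≤ ellellell (1 - r) := one_le_ellellell _
  have hB2 : ellellell (1 - r) ≤ 2 := by
    have hinv : (1 - r)⁻¹ ≤ 2 := by
      rw [show (2:ℝ) = ((1:ℝ)/2)⁻¹ by norm_num]
      exact inv_anti₀ (by norm_num) (by linarith)
    have hneg : -Real.log (1 - r) ≤ 1 := by
      have := Real.log_le_sub_one_of_pos (inv_pos.mpr h1r0)
      rw [Real.log_inv] at this
      linarith
    have he1 : ell (1 - r) ≤ 2 := by rw [ell_eq h1r0 h1r1]; linarith
    have he2 : ellell (1 - r) ≤ 2 := by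
      have h := Real.log_le_sub_one_of_pos
        (lt_of_lt_of_le one_pos (one_le_ell (1 - r)))
      unfold ellell; linarith
    have h := Real.log_le_sub_one_of_pos
      (lt_of_lt_of_le one_pos (one_le_ellell (1 - r)))
    unfold ellellell; linarith
  set L := ellellell r with hLdef
  set I := ellellell r - ellellell (1 - r) with hIdef
  have hI_pos : 0 < I := by rw [hIdef]; linarith
  have hI_ge : L/2 ≤ I := by rw [hIdef, hLdef]; linarith
  have hI_le : I ≤ L := by rw [hIdef, hLdef]; linarith
  have hL0 : (0:ℝ) < L := by linarith
  -- the auxiliary function g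
  set g := fun x : ℝ => x⁻¹ * (ell x)⁻¹ * (ellell x)⁻¹ with hgdef
  have hgcont : ContinuousOn g (Icc r (1 - r)) := g_contOn hr0
  have hInt : IntegrableOn g (Ioo r (1 - r)) volume :=
    (hgcont.integrableOn_Icc).mono_set Ioo_subset_Icc_self
  -- compute the eLpNorm
  have hnorm : eLpNorm (fun s : ℝ =>
        s ^ (-pR) * ell s ^ (-pR) * ellell s ^ (-pR))
        q' (volume.restrict (Ioo r (1 - r))) = ENNReal.ofReal (I ^ pR) := by
    rw [eLpNorm_eq_lintegral_rpow_enorm_toReal hq'0 hq'top]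
    have key : ∀ y : ℝ, 0 < y → (y ^ (-pR)) ^ q'.toReal = y⁻¹ := by
      intro y hy
      rw [← Real.rpow_mul hy.le]
      have : -pR * q'.toReal = -1 := by
        rw [neg_mul, mul_comm, hmul]
      rw [this, Real.rpow_neg_one]
    have hcongr : ∫⁻ x in Ioo r (1 - r),
        ‖x ^ (-pR) * ell x ^ (-pR) * ellell x ^ (-pR)‖ₑ ^ q'.toReal
        = ∫⁻ x in Ioo r (1 - r), ENNReal.ofReal (g x) := by
      apply setLIntegral_congr_fun measurableSet_Ioo
      refine fun x hx => ?_
      beta_reduce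
      have hx0 : 0 < x := hr0.trans hx.1
      have hx1 : x < 1 := by have := hx.2; linarith
      have hell : (0:ℝ) < ell x := lt_of_lt_of_le one_pos (one_le_ell x)
      have hellell : (0:ℝ) < ellell x := lt_of_lt_of_le one_pos (one_le_ellell x)
      have hfx : 0 < x ^ (-pR) * ell x ^ (-pR) * ellell x ^ (-pR) := by positivity
      rw [Real.enorm_eq_ofReal hfx.le, ENNReal.ofReal_rpow_of_pos hfx]
      congr 1
      rw [Real.mul_rpow (by positivity) (by positivity),
        Real.mul_rpow (by positivity) (by positivity),
        key x hx0, key _ hell, key _ hellell]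
    rw [hcongr]
    have hnn : 0 ≤ᵐ[volume.restrict (Ioo r (1 - r))] g := by
      refine (ae_restrict_iff' measurableSet_Ioo).mpr (ae_of_all _ fun x hx => ?_)
      have hx0 : 0 < x := hr0.trans hx.1
      have hell : (0:ℝ) < ell x := lt_of_lt_of_le one_pos (one_le_ell x)
      have hellell : (0:ℝ) < ellell x := lt_of_lt_of_le one_pos (one_le_ellell x)
      rw [hgdef]
      positivity
    rw [← ofReal_integral_eq_lintegral_ofReal hInt hnn]
    have hFTC : ∫ x in r..(1 - r), g x
        = -(1 + Real.log (1 + Real.log (1 - Real.log (1 - r))))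
          - -(1 + Real.log (1 + Real.log (1 - Real.log r))) := by
      refine intervalIntegral.integral_eq_sub_of_hasDerivAt
        (f := fun t : ℝ => -(1 + Real.log (1 + Real.log (1 - Real.log t))))
        (fun x hx => ?_) ?_
      · rw [uIcc_of_le hle] at hx
        have hx0 : 0 < x := lt_of_lt_of_le hr0 hx.1
        have hx1 : x < 1 := lt_of_le_of_lt hx.2 h1r1
        exact hasDerivAt_negF hx0 hx1
      · apply ContinuousOn.intervalIntegrable
        rw [uIcc_of_le hle]
        exact hgcont
    have hIval : ∫ x in Ioo r (1 - r), g x = I := by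
      rw [← integral_Ioc_eq_integral_Ioo, ← intervalIntegral.integral_of_le hle, hFTC,
        hIdef, F_eq hr0 hr1, F_eq h1r0 h1r1]
      ring
    rw [hIval, show (1 / q'.toReal) = pR by rw [hpR, one_div],
      ENNReal.ofReal_rpow_of_pos hI_pos]
  rw [hnorm]
  constructor
  · apply ENNReal.ofReal_le_ofReal
    have h1 : ((1:ℝ)/2) ≤ (1/2:ℝ) ^ pR := by
      calc (1/2:ℝ) = (1/2:ℝ) ^ (1:ℝ) := (Real.rpow_one _).symm
      _ ≤ (1/2:ℝ) ^ pR := Real.rpow_le_rpow_of_exponent_ge (by norm_num) (by norm_num) hp_le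
    have h2 : (1/2:ℝ) * L ^ pR ≤ ((1/2) * L) ^ pR := by
      rw [Real.mul_rpow (by norm_num) hL0.le]
      exact mul_le_mul_of_nonneg_right h1 (Real.rpow_nonneg hL0.le _)
    have h3 : ((1/2:ℝ) * L) ^ pR ≤ I ^ pR :=
      Real.rpow_le_rpow (by linarith) (by linarith) hp_pos.le
    calc (1/2:ℝ) * L ^ pR ≤ ((1/2) * L) ^ pR := h2
    _ ≤ I ^ pR := h3
  · apply ENNReal.ofReal_le_ofReal
    have : I ^ pR ≤ L ^ pR := Real.rpow_le_rpow hI_pos.le hI_le hp_pos.le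
    linarith
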